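/- For integers n ≥ 1, define f_1 = 0 and suppose f_p = E|C(p; U) − C(p−1; U)| where C(0;u)=0, C(p;u) = p−1+C(⌊p·u_1⌋; shift(u)) and U = (U_1, U_2, …) are i.i.d. uniform on [0,1]. Then f_p ≤ 1 + (1/(p(p−1)))·Σ_{k=1}^{p−1} k·f_k for all p ≥ 2, and consequently f_p ≤ 2 for all p ≥ 1. -/

import Mathlib

open MeasureTheory ProbabilityTheory

/-- Comparison count of Quickselect for the minimum along a fixed sequence of draws.
For sequences with values in `[0,1)` the `min` is inactive and this agrees with the
recursion `C (n+1) u = n + C ⌊(n+1) u₀⌋ (shift u)`. -/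
noncomputable def C : ℕ → (ℕ → ℝ) → ℕ
  | 0, _ => 0
  | (n + 1), u => n + C (min (⌊((n : ℝ) + 1) * u 0⌋.toNat) n) (fun k => u (k + 1))
  decreasing_by exact Nat.lt_succ_of_le (Nat.min_le_right _ _)

def shf (u : ℕ → ℝ) : ℕ → ℝ := fun k => u (k + 1)

noncomputable def A (p : ℕ) (x : ℝ) : ℕ := min (⌊(p : ℝ) * x⌋.toNat) (p - 1)

lemma C_eq (n : ℕ) (u : ℕ → ℝ) : C (n+1) u = n + C (A (n+1) (u 0)) (shf u) := by
  rw [C]; simp only [A, shf, Nat.add_sub_cancel]; norm_num; rfl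

lemma A_le (n : ℕ) (x : ℝ) : A (n+1) x ≤ n := by simp [A]

lemma C_zero (u : ℕ → ℝ) : C 0 u = 0 := by rw [C]

lemma C_one (u : ℕ → ℝ) : C 1 u = 0 := by
  rw [C_eq]
  have : A 1 (u 0) = 0 := by simp [A]
  rw [this, C_zero]

lemma C_congr : ∀ p (u v : ℕ → ℝ), (∀ i < p, u i = v i) → C p u = C p v := by
  intro p
  induction p using Nat.strong_induction_on with
  | _ p ih =>
    match p with
    | 0 => intro u v h; rw [C_zero, C_zero]
    | n+1 =>
      intro u v h
      rw [C_eq, C_eq, h 0 (Nat.succ_pos n)]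
      congr 1
      have hA := A_le n (v 0)
      exact ih _ (Nat.lt_succ_of_le hA) _ _ (fun i hi => h (i+1) (by omega))

lemma C_le : ∀ p (u : ℕ → ℝ), C p u ≤ p * p := by
  intro p
  induction p using Nat.strong_induction_on with
  | _ p ih =>
    match p with
    | 0 => intro u; simp [C_zero]
    | n+1 =>
      intro u
      rw [C_eq]
      have h1 := A_le n (u 0)
      have h2 := ih _ (Nat.lt_succ_of_le h1) (shf u)
      have h3 : A (n+1) (u 0) * A (n+1) (u 0) ≤ n * n := Nat.mul_le_mul h1 h1
      have h4 : (n+1) * (n+1) = n*n + 2*n + 1 := by ring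
      omega

lemma A_zero_of_nonpos (p : ℕ) {x : ℝ} (hx : x ≤ 0) : A p x = 0 := by
  have h0 : (p:ℝ) * x ≤ 0 := mul_nonpos_of_nonneg_of_nonpos (by positivity) hx
  have h : ⌊(p:ℝ) * x⌋.toNat = 0 := Int.toNat_of_nonpos (Int.floor_nonpos h0)
  simp [A, h]

lemma A_mono (n : ℕ) (x : ℝ) : A (n+1) x ≤ A (n+2) x := by
  rcases le_or_gt 0 x with hx | hx
  · have h : (⌊((n+1:ℕ) : ℝ) * x⌋) ≤ ⌊((n+2:ℕ) : ℝ) * x⌋ := by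
      apply Int.floor_le_floor
      apply mul_le_mul_of_nonneg_right _ hx
      push_cast; linarith
    simp only [A, Nat.add_sub_cancel]
    exact le_min (le_trans (min_le_left _ _) (Int.toNat_le_toNat h)) (le_trans (min_le_right _ _) (by omega))
  · rw [A_zero_of_nonpos (n+1) hx.le]
    exact Nat.zero_le _

lemma C_mono : ∀ p q, q ≤ p → ∀ u : ℕ → ℝ, C q u ≤ C p u := by
  intro p
  induction p using Nat.strong_induction_on with
  | _ p ih =>
    intro q hq u
    rcases eq_or_lt_of_le hq with rfl | hlt
    · exact le_refl _
    · match p, hlt with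
      | n+1, hlt =>
        have hq' : q ≤ n := by omega
        refine le_trans (ih n (Nat.lt_succ_self n) q hq' u) ?_
        match n with
        | 0 => simp [C_zero]
        | m+1 =>
          rw [C_eq, C_eq]
          have h1 : A (m+1) (u 0) ≤ A (m+1+1) (u 0) := A_mono m (u 0)
          have h2 : A (m+1+1) (u 0) ≤ m+1 := A_le (m+1) (u 0)
          have h3 : C (A (m+1) (u 0)) (shf u) ≤ C (A (m+1+1) (u 0)) (shf u) :=
            ih (A (m+1+1) (u 0)) (by omega) (A (m+1) (u 0)) h1 (shf u)
          omega

lemma A_of_mem (p k : ℕ) (hp : 2 ≤ p) (hk1 : 1 ≤ k) (hk : k ≤ p - 1) {x : ℝ}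
    (hx : (k:ℝ)/p ≤ x) (hx' : x < (k:ℝ)/((p:ℝ)-1)) :
    A p x = k ∧ A (p-1) x = k - 1 := by
  have hp0 : (0:ℝ) < p := by positivity
  have hp1 : (0:ℝ) < (p:ℝ) - 1 := by
    have : (2:ℝ) ≤ p := by exact_mod_cast hp
    linarith
  have hkp : (k:ℝ) ≤ (p:ℝ) - 1 := by
    have : (k:ℝ) ≤ ((p-1:ℕ):ℝ) := by exact_mod_cast hk
    rwa [Nat.cast_sub (by omega), Nat.cast_one] at this
  have hxk : (k:ℝ) ≤ (p:ℝ) * x := by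
    rw [div_le_iff₀ hp0] at hx; linarith
  have hx1 : x < 1 := lt_of_lt_of_le hx' (by rw [div_le_one hp1]; linarith)
  have hxk' : ((p:ℝ)-1) * x < k := by
    rw [lt_div_iff₀ hp1] at hx'; linarith
  have hfl : ⌊(p:ℝ) * x⌋ = (k:ℤ) := by
    rw [Int.floor_eq_iff]
    constructor
    · exact_mod_cast hxk
    · push_cast
      have : (p:ℝ) * x = ((p:ℝ)-1) * x + x := by ring
      rw [this]; linarith
  have hfl' : ⌊((p:ℝ)-1) * x⌋ = (k:ℤ) - 1 := by
    rw [Int.floor_eq_iff]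
    constructor
    · have : (k:ℝ) - 1 ≤ ((p:ℝ)-1) * x := by
        have h1 : ((p:ℝ)-1) * ((k:ℝ)/p) ≤ ((p:ℝ)-1) * x :=
          mul_le_mul_of_nonneg_left hx hp1.le
        have h2 : (k:ℝ) - 1 ≤ ((p:ℝ)-1) * ((k:ℝ)/p) := by
          rw [← mul_div_assoc, le_div_iff₀ hp0]
          have hk2 : (k:ℝ) ≤ p := by linarith
          nlinarith
        linarith
      push_cast; linarith
    · push_cast; linarith
  constructor
  · simp only [A, hfl, Int.toNat_natCast]
    exact min_eq_left (by omega)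
  · have hc : ((p-1:ℕ):ℝ) = (p:ℝ) - 1 := by
      rw [Nat.cast_sub (by omega), Nat.cast_one]
    have : ⌊((p-1:ℕ):ℝ) * x⌋ = (k:ℤ) - 1 := by rw [hc, hfl']
    simp only [A, this]
    have h1 : ((k:ℤ) - 1).toNat = k - 1 := by omega
    rw [h1]
    exact min_eq_left (by omega)

lemma A_cases (p : ℕ) (hp : 2 ≤ p) {x : ℝ} (hx : 0 ≤ x) (hx1 : x < 1) :
    A p x = A (p-1) x ∨
      (A p x = A (p-1) x + 1 ∧ 1 ≤ A p x ∧ A p x ≤ p - 1 ∧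
        (A p x : ℝ)/p ≤ x ∧ x < (A p x : ℝ)/((p:ℝ)-1)) := by
  have hp0 : (0:ℝ) < p := by positivity
  have hp1 : (0:ℝ) < (p:ℝ) - 1 := by
    have : (2:ℝ) ≤ p := by exact_mod_cast hp
    linarith
  have hc : ((p-1:ℕ):ℝ) = (p:ℝ) - 1 := by
    rw [Nat.cast_sub (by omega), Nat.cast_one]
  set a := ⌊(p:ℝ) * x⌋ with ha
  set b := ⌊((p:ℝ)-1) * x⌋ with hb
  have ha0 : 0 ≤ a := Int.floor_nonneg.2 (by positivity)
  have hb0 : 0 ≤ b := Int.floor_nonneg.2 (by positivity)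
  have hab : b ≤ a := Int.floor_le_floor (by nlinarith)
  have hab' : a ≤ b + 1 := by
    have h1 : (p:ℝ) * x ≤ ((p:ℝ)-1) * x + 1 := by nlinarith
    calc a ≤ ⌊((p:ℝ)-1) * x + 1⌋ := Int.floor_le_floor h1
    _ = b + 1 := by rw [Int.floor_add_one]
  have hap : a < (p:ℤ) := Int.floor_lt.2 (by push_cast; nlinarith)
  have hbp : b < (p:ℤ) - 1 := Int.floor_lt.2 (by push_cast; nlinarith)
  have hA : A p x = a.toNat := by
    simp only [A, ← ha]
    exact min_eq_left (by omega)
  have hA' : A (p-1) x = b.toNat := by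
    simp only [A, hc, ← hb]
    exact min_eq_left (by omega)
  rcases (by omega : a = b ∨ a = b + 1) with heq | heq
  · left; rw [hA, hA', heq]
  · right
    have hcast : ((A p x : ℕ):ℝ) = (a:ℝ) := by
      rw [hA]
      exact_mod_cast congrArg Int.cast (Int.toNat_of_nonneg ha0)
    refine ⟨by rw [hA, hA']; omega, by rw [hA]; omega, by rw [hA]; omega, ?_, ?_⟩
    · rw [div_le_iff₀ hp0, hcast]
      have h4 := Int.floor_le ((p:ℝ) * x)
      rw [← ha] at h4
      linarith
    · rw [lt_div_iff₀ hp1, hcast]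
      have h2 := Int.lt_floor_add_one (((p:ℝ)-1) * x)
      have h3 : ((b:ℝ) + 1) = (a:ℝ) := by exact_mod_cast congrArg Int.cast heq.symm
      rw [← hb] at *
      linarith

lemma diff_nonneg' (p : ℕ) (u : ℕ → ℝ) : (0:ℝ) ≤ (C p u : ℝ) - (C (p-1) u : ℝ) := by
  rw [sub_nonneg]
  exact_mod_cast C_mono p (p-1) (Nat.sub_le p 1) u

lemma diff_abs_le (k : ℕ) (u : ℕ → ℝ) : |(C k u : ℝ) - (C (k-1) u : ℝ)| ≤ (k:ℝ) * k := by
  rw [abs_of_nonneg (diff_nonneg' k u)]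
  have h1 : (0:ℝ) ≤ (C (k-1) u : ℝ) := Nat.cast_nonneg _
  have h2 : ((C k u : ℕ):ℝ) ≤ ((k*k : ℕ):ℝ) := Nat.cast_le.2 (C_le k u)
  push_cast at h2
  linarith

lemma ptwise (p : ℕ) (hp : 2 ≤ p) (u : ℕ → ℝ) (h0 : 0 ≤ u 0) (h1 : u 0 < 1) :
    (C p u : ℝ) - (C (p-1) u : ℝ) =
      1 + ∑ k ∈ Finset.Icc 1 (p-1),
        (Set.Ico ((k:ℝ)/p) ((k:ℝ)/((p:ℝ)-1))).indicator (fun _ => (1:ℝ)) (u 0) *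
          ((C k (shf u) : ℝ) - (C (k-1) (shf u) : ℝ)) := by
  obtain ⟨n, rfl⟩ : ∃ n, p = n + 2 := ⟨p - 2, by omega⟩
  have e1 : n + 2 - 1 = n + 1 := rfl
  simp only [e1]
  have hC2 : C (n+2) u = (n+1) + C (A (n+2) (u 0)) (shf u) := C_eq (n+1) u
  have hC1 : C (n+1) u = n + C (A (n+1) (u 0)) (shf u) := C_eq n u
  have hcases := A_cases (n+2) hp h0 h1
  rw [e1] at hcases
  rw [hC2, hC1]
  rcases hcases with heq | ⟨hsucc, hk1, hkp, hxlo, hxhi⟩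
  · rw [heq, Finset.sum_eq_zero]
    · push_cast; ring
    · intro k hk
      rw [Finset.mem_Icc] at hk
      have hnm : u 0 ∉ Set.Ico ((k:ℝ)/(n+2:ℕ)) ((k:ℝ)/(((n+2:ℕ):ℝ)-1)) := by
        rintro ⟨hlo, hhi⟩
        have h := A_of_mem (n+2) k hp hk.1 (by omega : k ≤ n+2-1) hlo hhi
        rw [e1] at h
        omega
      rw [Set.indicator_of_notMem hnm, zero_mul]
  · set k₀ := A (n+2) (u 0) with hk₀
    have hmem : k₀ ∈ Finset.Icc 1 (n+1) := Finset.mem_Icc.2 ⟨hk1, hkp⟩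
    rw [Finset.sum_eq_single_of_mem k₀ hmem]
    · have hm : u 0 ∈ Set.Ico ((k₀:ℝ)/((n+2:ℕ):ℝ)) ((k₀:ℝ)/(((n+2:ℕ):ℝ)-1)) := ⟨hxlo, hxhi⟩
      rw [Set.indicator_of_mem hm, one_mul]
      have hA1 : A (n+1) (u 0) = k₀ - 1 := by omega
      rw [hA1]
      push_cast
      ring
    · intro k hk hne
      rw [Finset.mem_Icc] at hk
      have hnm : u 0 ∉ Set.Ico ((k:ℝ)/(n+2:ℕ)) ((k:ℝ)/(((n+2:ℕ):ℝ)-1)) := by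
        rintro ⟨hlo, hhi⟩
        have h := A_of_mem (n+2) k hp hk.1 (by omega : k ≤ n+2-1) hlo hhi
        exact hne (by omega)
      rw [Set.indicator_of_notMem hnm, zero_mul]

lemma measurable_A (p : ℕ) : Measurable (A p) := by
  have h1 : Measurable fun x : ℝ => ⌊(p:ℝ) * x⌋ :=
    Int.measurable_floor.comp (measurable_id.const_mul _)
  exact (measurable_from_top (f := fun z : ℤ => min z.toNat (p-1))).comp h1

lemma measurable_C (p : ℕ) : Measurable (C p : (ℕ → ℝ) → ℕ) := by
  induction p using Nat.strong_induction_on with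
  | _ p ih =>
    match p with
    | 0 =>
      have h : (C 0 : (ℕ → ℝ) → ℕ) = fun _ => 0 := funext C_zero
      rw [h]; exact measurable_const
    | n+1 =>
      have hshf : Measurable shf := measurable_pi_lambda _ fun k => measurable_pi_apply (k+1)
      have heq : (C (n+1) : (ℕ → ℝ) → ℕ) = fun u =>
          n + ∑ j ∈ Finset.range (n+1), if A (n+1) (u 0) = j then C j (shf u) else 0 := by
        funext u
        rw [C_eq, Finset.sum_ite_eq, if_pos (Finset.mem_range.2 (Nat.lt_succ_of_le (A_le n (u 0))))]
      rw [heq]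
      apply Measurable.add measurable_const
      apply Finset.measurable_sum
      intro j hj
      apply Measurable.ite _ ((ih j (Finset.mem_range.1 hj)).comp hshf) measurable_const
      exact ((measurable_A (n+1)).comp (measurable_pi_apply 0)) (measurableSet_singleton j)

lemma map_eq_pi {Ω : Type*} [MeasureSpace Ω] [IsProbabilityMeasure (ℙ : Measure Ω)]
    (U : ℕ → Ω → ℝ) (hUmeas : ∀ k, Measurable (U k))
    (hUunif : ∀ k, Measure.map (U k) ℙ = volume.restrict (Set.Icc (0:ℝ) 1))
    (hindep : iIndepFun U ℙ)
    (m : ℕ) (c : Fin m → ℕ) (hc : Function.Injective c) :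
    Measure.map (fun ω => (fun i : Fin m => U (c i) ω)) ℙ
      = Measure.pi (fun _ : Fin m => volume.restrict (Set.Icc (0:ℝ) 1)) := by
  classical
  refine (Measure.pi_eq ?_).symm
  intro s hs
  rw [Measure.map_apply (measurable_pi_lambda _ fun i => hUmeas (c i)) (MeasurableSet.univ_pi hs)]
  set sets : ℕ → Set ℝ := fun n => ⋂ (i : Fin m) (_ : c i = n), s i with hsets
  have hmeas : ∀ n, MeasurableSet (sets n) := fun n =>
    MeasurableSet.iInter fun i => MeasurableSet.iInter fun _ => hs i
  have hsc : ∀ i : Fin m, sets (c i) = s i := by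
    intro i
    apply Set.Subset.antisymm
    · intro x hx
      simp only [hsets, Set.mem_iInter] at hx
      exact hx i rfl
    · intro x hx
      simp only [hsets, Set.mem_iInter]
      intro j hj
      cases hc hj
      exact hx
  have hpre : (fun ω => (fun i : Fin m => U (c i) ω)) ⁻¹' Set.pi Set.univ s
      = ⋂ n ∈ Finset.image c Finset.univ, U n ⁻¹' sets n := by
    ext ω
    simp only [Set.mem_preimage, Set.mem_pi, Set.mem_univ, forall_true_left, Set.mem_iInter,
      Finset.mem_image, Finset.mem_univ, true_and, forall_exists_index]
    constructor
    · rintro h n i rfl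
      rw [hsc i]
      exact h i
    · intro h i
      have := h (c i) i rfl
      rwa [hsc i] at this
  rw [hpre, hindep.measure_inter_preimage_eq_mul _ (fun n _ => hmeas n),
    Finset.prod_image (fun i _ j _ h => hc h)]
  apply Finset.prod_congr rfl
  intro i _
  rw [hsc i, ← hUunif (c i), Measure.map_apply (hUmeas (c i)) (hs i)]

noncomputable def extk (k : ℕ) (v : Fin k → ℝ) : ℕ → ℝ := fun j => if h : j < k then v ⟨j, h⟩ else 0

noncomputable def gk (k : ℕ) (v : Fin k → ℝ) : ℝ := (C k (extk k v) : ℝ) - (C (k-1) (extk k v) : ℝ)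

lemma measurable_extk (k : ℕ) : Measurable (extk k) := by
  apply measurable_pi_lambda
  intro j
  by_cases h : j < k
  · simpa [extk, h] using measurable_pi_apply (⟨j, h⟩ : Fin k)
  · simpa [extk, h] using measurable_const

lemma measurable_gk (k : ℕ) : Measurable (gk k) := by
  apply Measurable.sub
  · exact measurable_from_top.comp ((measurable_C k).comp (measurable_extk k))
  · exact measurable_from_top.comp ((measurable_C (k-1)).comp (measurable_extk k))

lemma gk_eq (k : ℕ) (u : ℕ → ℝ) : gk k (fun i : Fin k => u i) = (C k u : ℝ) - (C (k-1) u : ℝ) := by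
  have h1 : C k (extk k (fun i : Fin k => u i)) = C k u :=
    C_congr k _ _ (fun i hi => by simp [extk, hi])
  have h2 : C (k-1) (extk k (fun i : Fin k => u i)) = C (k-1) u :=
    C_congr (k-1) _ _ (fun i hi => by
      have h : i < k := lt_of_lt_of_le hi (Nat.sub_le k 1)
      simp [extk, h])
  simp only [gk]
  rw [h1, h2]

theorem stmt_19 {Ω : Type*} [MeasureSpace Ω] [IsProbabilityMeasure (ℙ : Measure Ω)]
    (U : ℕ → Ω → ℝ) (hUmeas : ∀ k, Measurable (U k))
    (hUunif : ∀ k, Measure.map (U k) ℙ = volume.restrict (Set.Icc (0:ℝ) 1))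
    (hindep : iIndepFun U ℙ)
    (f : ℕ → ℝ)
    (hf : ∀ p, f p = ∫ ω, |(C p (fun k => U k ω) : ℝ) - (C (p - 1) (fun k => U k ω) : ℝ)| ∂ℙ) :
    (∀ p : ℕ, 2 ≤ p →
      f p ≤ 1 + (1 / ((p : ℝ) * ((p : ℝ) - 1))) * ∑ k ∈ Finset.Icc 1 (p - 1), (k : ℝ) * f k) ∧
    (∀ p, 1 ≤ p → f p ≤ 2) := by
  classical
  have hS : ∀ c : ℕ → ℕ, Measurable fun ω => (fun k => U (c k) ω) :=
    fun c => measurable_pi_lambda _ fun k => hUmeas (c k)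
  have measD : ∀ (k : ℕ) (c : ℕ → ℕ),
      Measurable fun ω => ((C k (fun j => U (c j) ω) : ℝ) - (C (k-1) (fun j => U (c j) ω) : ℝ)) := by
    intro k c
    exact (measurable_from_top.comp ((measurable_C k).comp (hS c))).sub
      (measurable_from_top.comp ((measurable_C (k-1)).comp (hS c)))
  have fpos : ∀ p, f p = ∫ ω, ((C p (fun k => U k ω) : ℝ) - (C (p-1) (fun k => U k ω) : ℝ)) ∂ℙ := by
    intro p
    rw [hf p]
    exact integral_congr_ae (ae_of_all _ fun ω => abs_of_nonneg (diff_nonneg' p _))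
  have fnonneg : ∀ p, 0 ≤ f p := by
    intro p; rw [hf p]; exact integral_nonneg fun ω => abs_nonneg _
  have dist_eq : ∀ (k : ℕ) (c : ℕ → ℕ), Function.Injective c →
      ∫ ω, ((C k (fun j => U (c j) ω) : ℝ) - (C (k-1) (fun j => U (c j) ω) : ℝ)) ∂ℙ = f k := by
    intro k c hcinj
    have hmap : ∀ (d : Fin k → ℕ), Function.Injective d →
        ∫ ω, gk k (fun i => U (d i) ω) ∂ℙ
          = ∫ v, gk k v ∂(Measure.pi fun _ : Fin k => volume.restrict (Set.Icc (0:ℝ) 1)) := by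
      intro d hd
      rw [← map_eq_pi U hUmeas hUunif hindep k d hd,
        integral_map (measurable_pi_lambda _ fun i => hUmeas (d i)).aemeasurable
          (measurable_gk k).aestronglyMeasurable]
    have e1 : (fun ω => ((C k (fun j => U (c j) ω) : ℝ) - (C (k-1) (fun j => U (c j) ω) : ℝ)))
        = fun ω => gk k (fun i : Fin k => U (c i) ω) :=
      funext fun ω => (gk_eq k _).symm
    have e2 : (fun ω => ((C k (fun j => U j ω) : ℝ) - (C (k-1) (fun j => U j ω) : ℝ)))
        = fun ω => gk k (fun i : Fin k => U i ω) :=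
      funext fun ω => (gk_eq k _).symm
    rw [fpos k, e1, e2, hmap (fun i => c i) (fun i j h => Fin.val_injective (hcinj h)),
      hmap (fun i : Fin k => (i:ℕ)) Fin.val_injective]
  have key : ∀ p : ℕ, 2 ≤ p →
      f p = 1 + ∑ k ∈ Finset.Icc 1 (p-1), ((k:ℝ)/((p:ℝ)*((p:ℝ)-1))) * f k := by
    intro p hp
    have hp0 : (0:ℝ) < p := by positivity
    have hp2 : (2:ℝ) ≤ p := by exact_mod_cast hp
    have hp1 : (0:ℝ) < (p:ℝ) - 1 := by linarith
    have hae : ∀ᵐ ω ∂ℙ, U 0 ω ∈ Set.Ico (0:ℝ) 1 := by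
      rw [ae_iff]
      have hm : MeasurableSet (Set.Ico (0:ℝ) 1) := measurableSet_Ico
      have hpre : {ω | ¬ U 0 ω ∈ Set.Ico (0:ℝ) 1} = U 0 ⁻¹' (Set.Ico (0:ℝ) 1)ᶜ := rfl
      rw [hpre, ← Measure.map_apply (hUmeas 0) hm.compl, hUunif 0,
        Measure.restrict_apply hm.compl]
      have h1 : (Set.Ico (0:ℝ) 1)ᶜ ∩ Set.Icc 0 1 = {1} := by
        ext x
        simp only [Set.mem_inter_iff, Set.mem_compl_iff, Set.mem_Ico, Set.mem_Icc,
          Set.mem_singleton_iff, not_and, not_lt]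
        constructor
        · rintro ⟨h1, h2, h3⟩
          have := h1 h2
          linarith
        · rintro rfl
          exact ⟨fun _ => le_refl 1, by norm_num, le_refl 1⟩
      rw [h1, Real.volume_singleton]
    rw [fpos p]
    have heq1 : ∫ ω, ((C p (fun k => U k ω) : ℝ) - (C (p-1) (fun k => U k ω) : ℝ)) ∂ℙ
        = ∫ ω, (1 + ∑ k ∈ Finset.Icc 1 (p-1),
            (Set.Ico ((k:ℝ)/p) ((k:ℝ)/((p:ℝ)-1))).indicator (fun _ => (1:ℝ)) (U 0 ω) *
              ((C k (fun j => U (j+1) ω) : ℝ) - (C (k-1) (fun j => U (j+1) ω) : ℝ))) ∂ℙ := by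
      apply integral_congr_ae
      filter_upwards [hae] with ω hω
      exact ptwise p hp (fun k => U k ω) hω.1 hω.2
    rw [heq1]
    have hterms : ∀ k ∈ Finset.Icc 1 (p-1), Integrable (fun ω =>
        (Set.Ico ((k:ℝ)/p) ((k:ℝ)/((p:ℝ)-1))).indicator (fun _ => (1:ℝ)) (U 0 ω) *
          ((C k (fun j => U (j+1) ω) : ℝ) - (C (k-1) (fun j => U (j+1) ω) : ℝ))) ℙ := by
      intro k _
      have hm : Measurable (fun ω =>
          (Set.Ico ((k:ℝ)/p) ((k:ℝ)/((p:ℝ)-1))).indicator (fun _ => (1:ℝ)) (U 0 ω) *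
            ((C k (fun j => U (j+1) ω) : ℝ) - (C (k-1) (fun j => U (j+1) ω) : ℝ))) :=
        ((measurable_const.indicator measurableSet_Ico).comp (hUmeas 0)).mul
          (measD k (fun j => j+1))
      refine ⟨hm.aestronglyMeasurable,
        HasFiniteIntegral.of_bounded (C := (k:ℝ)*k) (ae_of_all _ fun ω => ?_)⟩
      rw [Real.norm_eq_abs, abs_mul]
      have h1 : |(Set.Ico ((k:ℝ)/p) ((k:ℝ)/((p:ℝ)-1))).indicator (fun _ => (1:ℝ)) (U 0 ω)| ≤ 1 := by
        by_cases h : U 0 ω ∈ Set.Ico ((k:ℝ)/p) ((k:ℝ)/((p:ℝ)-1))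
        · simp [Set.indicator_of_mem h]
        · simp [Set.indicator_of_notMem h]
      have h2 := diff_abs_le k (fun j => U (j+1) ω)
      calc |(Set.Ico ((k:ℝ)/p) ((k:ℝ)/((p:ℝ)-1))).indicator (fun _ => (1:ℝ)) (U 0 ω)| *
            |(C k (fun j => U (j+1) ω) : ℝ) - (C (k-1) (fun j => U (j+1) ω) : ℝ)|
          ≤ 1 * ((k:ℝ)*k) := mul_le_mul h1 h2 (abs_nonneg _) zero_le_one
        _ = (k:ℝ)*k := one_mul _
    have hterm : ∀ k ∈ Finset.Icc 1 (p-1),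
        ∫ ω, (Set.Ico ((k:ℝ)/p) ((k:ℝ)/((p:ℝ)-1))).indicator (fun _ => (1:ℝ)) (U 0 ω) *
            ((C k (fun j => U (j+1) ω) : ℝ) - (C (k-1) (fun j => U (j+1) ω) : ℝ)) ∂ℙ
          = ((k:ℝ)/((p:ℝ)*((p:ℝ)-1))) * f k := by
      intro k hk
      rw [Finset.mem_Icc] at hk
      have hkp : (k:ℝ) ≤ (p:ℝ) - 1 := by
        have : (k:ℝ) ≤ ((p-1:ℕ):ℝ) := by exact_mod_cast hk.2
        rwa [Nat.cast_sub (by omega), Nat.cast_one] at this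
      have hIm : MeasurableSet (Set.Ico ((k:ℝ)/p) ((k:ℝ)/((p:ℝ)-1))) := measurableSet_Ico
      have hdisj : Disjoint ({0} : Finset ℕ) (Finset.Icc 1 k) := by
        simp [Finset.disjoint_left]
      have hIF := hindep.indepFun_finset {0} (Finset.Icc 1 k) hdisj hUmeas
      set φ₁ : (({0} : Finset ℕ) → ℝ) → ℝ :=
        fun w => (Set.Ico ((k:ℝ)/p) ((k:ℝ)/((p:ℝ)-1))).indicator (fun _ => (1:ℝ))
          (w ⟨0, Finset.mem_singleton_self 0⟩) with hφ₁
      set φ₂ : ((Finset.Icc 1 k : Finset ℕ) → ℝ) → ℝ :=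
        fun w => gk k (fun i : Fin k =>
          w ⟨(i:ℕ)+1, Finset.mem_Icc.2 ⟨Nat.le_add_left 1 i, Nat.succ_le_of_lt i.isLt⟩⟩) with hφ₂
      have hφ₁m : Measurable φ₁ :=
        (measurable_const.indicator hIm).comp (measurable_pi_apply _)
      have hφ₂m : Measurable φ₂ :=
        (measurable_gk k).comp (measurable_pi_lambda _ fun i => measurable_pi_apply _)
      have hXY := hIF.comp hφ₁m hφ₂m
      have hXY' : IndepFun
          (fun ω => (Set.Ico ((k:ℝ)/p) ((k:ℝ)/((p:ℝ)-1))).indicator (fun _ => (1:ℝ)) (U 0 ω))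
          (fun ω => ((C k (fun j => U (j+1) ω) : ℝ) - (C (k-1) (fun j => U (j+1) ω) : ℝ))) ℙ := by
        have e : (fun ω => ((C k (fun j => U (j+1) ω) : ℝ) - (C (k-1) (fun j => U (j+1) ω) : ℝ)))
            = φ₂ ∘ (fun ω (i : (Finset.Icc 1 k : Finset ℕ)) => U i ω) :=
          funext fun ω => (gk_eq k (fun j => U (j+1) ω)).symm
        rw [e]
        exact hXY
      have hprod := hXY'.integral_fun_mul_eq_mul_integral
        (((measurable_const.indicator hIm).comp (hUmeas 0)).aestronglyMeasurable)
        ((measD k (fun j => j+1)).aestronglyMeasurable)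
      rw [hprod, dist_eq k (fun j => j+1) (add_left_injective 1)]
      have hind : ∫ ω, (Set.Ico ((k:ℝ)/p) ((k:ℝ)/((p:ℝ)-1))).indicator (fun _ => (1:ℝ)) (U 0 ω) ∂ℙ
          = (k:ℝ)/((p:ℝ)*((p:ℝ)-1)) := by
        rw [← integral_map (hUmeas 0).aemeasurable
          ((measurable_const.indicator hIm)).aestronglyMeasurable, hUunif 0,
          integral_indicator_const _ hIm, Measure.real, Measure.restrict_apply hIm]
        have hsub : Set.Ico ((k:ℝ)/p) ((k:ℝ)/((p:ℝ)-1)) ∩ Set.Icc (0:ℝ) 1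
            = Set.Ico ((k:ℝ)/p) ((k:ℝ)/((p:ℝ)-1)) := by
          rw [Set.inter_eq_left]
          rintro x ⟨hx1, hx2⟩
          constructor
          · exact le_trans (by positivity) hx1
          · have : (k:ℝ)/((p:ℝ)-1) ≤ 1 := by rw [div_le_one hp1]; exact hkp
            linarith
        rw [hsub, Real.volume_Ico]
        have harith : (k:ℝ)/((p:ℝ)-1) - (k:ℝ)/p = (k:ℝ)/((p:ℝ)*((p:ℝ)-1)) := by
          field_simp
          ring
        rw [harith, ENNReal.toReal_ofReal (by positivity), smul_eq_mul, mul_one]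
      rw [hind]
    rw [integral_add (integrable_const 1) (integrable_finset_sum _ hterms),
      integral_const, probReal_univ, smul_eq_mul, mul_one,
      integral_finset_sum _ hterms]
    congr 1
    exact Finset.sum_congr rfl hterm
  constructor
  · intro p hp
    rw [key p hp]
    have h : (1/((p:ℝ) * ((p:ℝ)-1))) * ∑ k ∈ Finset.Icc 1 (p-1), (k:ℝ) * f k
        = ∑ k ∈ Finset.Icc 1 (p-1), ((k:ℝ)/((p:ℝ)*((p:ℝ)-1))) * f k := by
      rw [Finset.mul_sum]
      exact Finset.sum_congr rfl fun k _ => by ring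
    rw [h]
  · intro p
    induction p using Nat.strong_induction_on with
    | _ p ih =>
      intro hp
      match p, hp with
      | 1, _ =>
        have h1 : f 1 = 0 := by
          rw [hf 1]
          simp [C_one, C_zero]
        linarith
      | (n+2), _ =>
        rw [key (n+2) (by omega)]
        have e1 : n+2-1 = n+1 := rfl
        rw [e1]
        have hc1 : ((n+2:ℕ):ℝ) - 1 = ((n+1:ℕ):ℝ) := by push_cast; ring
        have hcpos : (0:ℝ) < ((n+2:ℕ):ℝ) * (((n+2:ℕ):ℝ)-1) := by
          rw [hc1]; positivity
        have hsumN : (∑ k ∈ Finset.Icc 1 (n+1), k) = ∑ i ∈ Finset.range (n+2), i := by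
          rw [Finset.range_eq_Ico, Finset.sum_eq_sum_Ico_succ_bot (by omega : 0 < n+2),
            show n+2 = (n+1)+1 from rfl, Finset.Ico_add_one_right_eq_Icc]
          simp
        have hgaussN : (∑ k ∈ Finset.Icc 1 (n+1), k) * 2 = (n+2) * (n+1) := by
          rw [hsumN, Finset.sum_range_id_mul_two, e1]
        have hsumR : (∑ k ∈ Finset.Icc 1 (n+1), (k:ℝ)) = ((n+2:ℕ):ℝ) * ((n+1:ℕ):ℝ) / 2 := by
          have := congrArg (fun m : ℕ => (m:ℝ)) hgaussN
          push_cast at this ⊢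
          linarith
        have hstep : ∑ k ∈ Finset.Icc 1 (n+1), ((k:ℝ)/(((n+2:ℕ):ℝ)*(((n+2:ℕ):ℝ)-1))) * f k
            ≤ ∑ k ∈ Finset.Icc 1 (n+1), ((k:ℝ)/(((n+2:ℕ):ℝ)*(((n+2:ℕ):ℝ)-1))) * 2 := by
          apply Finset.sum_le_sum
          intro k hk
          rw [Finset.mem_Icc] at hk
          apply mul_le_mul_of_nonneg_left _ (div_nonneg (Nat.cast_nonneg k) hcpos.le)
          exact ih k (by omega) (by omega)
        have hval : ∑ k ∈ Finset.Icc 1 (n+1), ((k:ℝ)/(((n+2:ℕ):ℝ)*(((n+2:ℕ):ℝ)-1))) * 2 = 1 := by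
          have e : ∀ k : ℕ, ((k:ℝ)/(((n+2:ℕ):ℝ)*(((n+2:ℕ):ℝ)-1))) * 2
              = (k:ℝ) * (2/(((n+2:ℕ):ℝ)*(((n+2:ℕ):ℝ)-1))) := fun k => by ring
          rw [Finset.sum_congr rfl (fun k _ => e k), ← Finset.sum_mul, hsumR, hc1]
          have h2 : ((n+2:ℕ):ℝ) ≠ 0 := by positivity
          have h3 : ((n+1:ℕ):ℝ) ≠ 0 := by positivity
          field_simp
        linarith
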